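/- For the Poisson bracket on polynomials in two variables given by {f,g} = xy·(∂ₓf ∂ᵧg − ∂ᵧf ∂ₓg), a polynomial f is a Casimir (i.e., {f,g} = 0 for all polynomials g) if and only if f is a constant. Hence the zeroth Lichnerowicz–Poisson cohomology of the quadratic Poisson structure P₂ = xy ∂ₓ∧∂ᵧ on polynomials is one-dimensional. -/

import Mathlib

noncomputable section
open MvPolynomial

lemma coeff_pderiv_aux (i : Fin 2) (f : MvPolynomial (Fin 2) ℝ) (m : Fin 2 →₀ ℕ) :
    coeff m (pderiv i f) = ((m i : ℝ) + 1) * coeff (m + Finsupp.single i 1) f := by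
  set si : Fin 2 →₀ ℕ := Finsupp.single i 1 with hsi
  induction f using MvPolynomial.induction_on' with
  | monomial s a =>
    rw [pderiv_monomial]
    classical
    simp only [coeff_monomial, ← hsi]
    by_cases h : s = m + si
    · subst h
      rw [if_pos (add_tsub_cancel_right m si), if_pos rfl]
      have h2 : (m + si) i = m i + 1 := by
        rw [Finsupp.add_apply, hsi, Finsupp.single_apply, if_pos rfl]
      rw [h2]; push_cast; ring
    · rw [if_neg h]
      by_cases h2 : s - si = m
      · by_cases h3 : s i = 0
        · have hss : s - si = s := by
            ext j
            rw [Finsupp.tsub_apply, hsi, Finsupp.single_apply]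
            split_ifs with hij
            · subst hij; omega
            · omega
          rw [hss] at h2; subst h2
          rw [if_pos hss]
          simp [h3]
        · exfalso; apply h
          ext j
          have hj2 : (s - si) j = m j := by rw [h2]
          rw [Finsupp.tsub_apply, hsi, Finsupp.single_apply] at hj2
          rw [Finsupp.add_apply, hsi, Finsupp.single_apply]
          rcases eq_or_ne i j with rfl | hij
          · rw [if_pos rfl] at hj2 ⊢; omega
          · rw [if_neg hij] at hj2 ⊢; omega
      · rw [if_neg h2, mul_zero]
  | add p q hp hq => simp [hp, hq]; ring

theorem const_of_pderivs_zero (f : MvPolynomial (Fin 2) ℝ)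
    (h0 : pderiv 0 f = 0) (h1 : pderiv 1 f = 0) : ∃ c, f = C c := by
  refine ⟨coeff 0 f, ?_⟩
  ext m
  rw [coeff_C]
  by_cases hm : m = 0
  · simp [hm, eq_comm]
  · rw [if_neg (Ne.symm hm)]
    have hex : ∃ i : Fin 2, m i ≠ 0 := by
      by_contra h; push_neg at h; apply hm; ext j; simp [h]
    obtain ⟨i, hi⟩ := hex
    set si : Fin 2 →₀ ℕ := Finsupp.single i 1 with hsi
    have key : pderiv i f = 0 := by fin_cases i <;> assumption
    have hc := coeff_pderiv_aux i f (m - si)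
    rw [key, coeff_zero, ← hsi] at hc
    have hms : m - si + si = m := by
      ext j
      rw [Finsupp.add_apply, Finsupp.tsub_apply, hsi, Finsupp.single_apply]
      split_ifs with hij
      · subst hij; omega
      · omega
    rw [hms] at hc
    have hpos : (((m - si) i : ℝ) + 1) ≠ 0 := by positivity
    exact (mul_eq_zero.mp hc.symm).resolve_left hpos

/-- The Poisson bracket of the quadratic Poisson structure P₂ = xy ∂ₓ∧∂ᵧ on ℝ[x,y]. -/
def pb2 (f g : MvPolynomial (Fin 2) ℝ) : MvPolynomial (Fin 2) ℝ :=
  X 0 * X 1 * (pderiv 0 f * pderiv 1 g - pderiv 1 f * pderiv 0 g)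

/-- f is a Casimir of P₂ = xy ∂ₓ∧∂ᵧ iff f is a constant; hence H⁰_LP is one-dimensional. -/
theorem casimir_P2_iff_const (f : MvPolynomial (Fin 2) ℝ) :
    (∀ g : MvPolynomial (Fin 2) ℝ, pb2 f g = 0) ↔ ∃ c : ℝ, f = C c := by
  constructor
  · intro h
    have h0 := h (X 1)
    have h1 := h (X 0)
    simp only [pb2, pderiv_X_self, pderiv_X_of_ne (by decide : (0:Fin 2) ≠ 1),
      pderiv_X_of_ne (by decide : (1:Fin 2) ≠ 0), mul_one, mul_zero, zero_mul,
      sub_zero, zero_sub, mul_neg, neg_eq_zero] at h0 h1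
    have hx : (X 0 * X 1 : MvPolynomial (Fin 2) ℝ) ≠ 0 :=
      mul_ne_zero (X_ne_zero _) (X_ne_zero _)
    exact const_of_pderivs_zero f
      ((mul_eq_zero.mp h0).resolve_left hx)
      ((mul_eq_zero.mp h1).resolve_left hx)
  · rintro ⟨c, rfl⟩ g
    simp [pb2]
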